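/- Let g be a finite-dimensional Lie algebra over ℂ. Then the following are equivalent: (1) g is degenerate, i.e. for all x, y, z ∈ g the symmetrized element ⁅x,y⁆⊗z + z⊗⁅x,y⁆ + ⁅y,z⁆⊗x + x⊗⁅y,z⁆ + ⁅z,x⁆⊗y + y⊗⁅z,x⁆ vanishes in g ⊗_ℂ g (equivalently, ⁅x,y⁆·z + ⁅y,z⁆·x + ⁅z,x⁆·y = 0 in the symmetric square Sym²(g)); (2) either g is abelian, or g has a basis e_1, …, e_{n−1}, f such that ⁅f, e_i⁆ = e_i for all i and ⁅e_i, e_j⁆ = 0 for all i, j. -/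

import Mathlib

open scoped TensorProduct
open Module

section Aux

variable {V : Type*} [AddCommGroup V] [Module ℂ V]

lemma pair_scalar {V : Type*} [AddCommGroup V] [Module ℂ V] {u v : V}
    (h : u ⊗ₜ[ℂ] v + v ⊗ₜ[ℂ] u = 0) (ψ χ : Dual ℂ V) :
    ψ u * χ v + ψ v * χ u = 0 := by
  have := congrArg ((TensorProduct.lid ℂ ℂ).toLinearMap.comp (TensorProduct.map ψ χ)) h
  simpa [smul_eq_mul] using this

lemma sym_tmul_eq_zero {V : Type*} [AddCommGroup V] [Module ℂ V] {u v : V}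
    (h : u ⊗ₜ[ℂ] v + v ⊗ₜ[ℂ] u = 0) : u = 0 ∨ v = 0 := by
  by_contra hc
  push_neg at hc
  obtain ⟨hu, hv⟩ := hc
  have key : ∀ ψ : Dual ℂ V, ψ u * ψ v = 0 := by
    intro ψ
    have := pair_scalar h ψ ψ
    have h2 : (2 : ℂ) * (ψ u * ψ v) = 0 := by ring_nf; linear_combination this
    simpa using h2
  obtain ⟨ψ₁, hψ₁⟩ : ∃ ψ : Dual ℂ V, ψ u ≠ 0 := by
    by_contra hcon; push_neg at hcon
    exact hu ((Module.forall_dual_apply_eq_zero_iff ℂ u).mp hcon)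
  obtain ⟨ψ₂, hψ₂⟩ : ∃ ψ : Dual ℂ V, ψ v ≠ 0 := by
    by_contra hcon; push_neg at hcon
    exact hv ((Module.forall_dual_apply_eq_zero_iff ℂ v).mp hcon)
  have h1v : ψ₁ v = 0 := by
    rcases mul_eq_zero.mp (key ψ₁) with h | h
    · exact absurd h hψ₁
    · exact h
  have h2u : ψ₂ u = 0 := by
    rcases mul_eq_zero.mp (key ψ₂) with h | h
    · exact h
    · exact absurd h hψ₂
  have := key (ψ₁ + ψ₂)
  simp [LinearMap.add_apply, h1v, h2u] at this
  rcases this with h | h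
  · exact hψ₁ h
  · exact hψ₂ h

lemma indep2 {x y : V} (hx : x ≠ 0) (hy : y ∉ Submodule.span ℂ ({x} : Set V))
    {a b : ℂ} (h : a • x + b • y = 0) : a = 0 ∧ b = 0 := by
  have hb : b = 0 := by
    by_contra hb
    apply hy
    rw [Submodule.mem_span_singleton]
    refine ⟨-(b⁻¹ * a), ?_⟩
    rw [neg_smul, ← smul_smul, ← smul_neg, ← eq_neg_of_add_eq_zero_right h,
      smul_smul, inv_mul_cancel₀ hb, one_smul]
  subst hb
  simp only [zero_smul, add_zero, smul_eq_zero] at h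
  exact ⟨h.resolve_right hx, rfl⟩

lemma indep3 {x y z : V} (hx : x ≠ 0) (hy : y ∉ Submodule.span ℂ ({x} : Set V))
    (hz : z ∉ Submodule.span ℂ ({x, y} : Set V))
    {a b c : ℂ} (h : a • x + b • y + c • z = 0) : a = 0 ∧ b = 0 ∧ c = 0 := by
  have hc : c = 0 := by
    by_contra hc
    apply hz
    rw [Submodule.mem_span_pair]
    refine ⟨-(c⁻¹ * a), -(c⁻¹ * b), ?_⟩
    have key : c • z = -(a • x + b • y) := eq_neg_of_add_eq_zero_right h
    have hz' : z = c⁻¹ • -(a • x + b • y) := by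
      rw [← key, smul_smul, inv_mul_cancel₀ hc, one_smul]
    rw [hz', smul_neg, smul_add, smul_smul, smul_smul]
    module
  subst hc
  simp only [zero_smul, add_zero] at h
  obtain ⟨ha, hb⟩ := indep2 hx hy h
  exact ⟨ha, hb, rfl⟩

lemma lemmaL (B : V →ₗ[ℂ] V →ₗ[ℂ] V) (halt : ∀ x, B x x = 0)
    (hspan : ∀ x y, B x y ∈ Submodule.span ℂ ({x, y} : Set V))
    (H2 : ∀ x : V, Submodule.span ℂ ({x} : Set V) ≠ ⊤) :
    ∃ φ : V →ₗ[ℂ] ℂ, ∀ x y, B x y = φ x • y - φ y • x := by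
  classical
  have hskew : ∀ x y, B x y = - B y x := by
    intro x y
    have h := halt (x + y)
    simp only [map_add, LinearMap.add_apply, halt, zero_add, add_zero] at h
    linear_combination (norm := module) h
  set S : V → ℂ → Prop :=
    fun x b => ∀ y, y ∉ Submodule.span ℂ ({x} : Set V) → ∃ a : ℂ, B x y = a • x + b • y with hS
  have exists_out : ∀ x : V, ∃ y, y ∉ Submodule.span ℂ ({x} : Set V) := by
    intro x
    obtain ⟨y, -, hy⟩ :=
      SetLike.exists_of_lt (lt_top_iff_ne_top.mpr (H2 x) : Submodule.span ℂ ({x} : Set V) < ⊤)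
    exact ⟨y, hy⟩
  have hPu : ∀ x b b', S x b → S x b' → b = b' := by
    intro x b b' hb hb'
    obtain ⟨y, hy⟩ := exists_out x
    obtain ⟨a, ha⟩ := hb y hy
    obtain ⟨a', ha'⟩ := hb' y hy
    have heq : a • x + b • y = a' • x + b' • y := ha.symm.trans ha'
    by_cases hx : x = 0
    · subst hx
      have hy0 : y ≠ 0 := by
        intro h; exact hy (by simp [h])
      simp only [smul_zero, zero_add] at heq
      have : (b - b') • y = 0 := by rw [sub_smul, heq, sub_self]
      rcases smul_eq_zero.mp this with h | h
      · exact sub_eq_zero.mp h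
      · exact absurd h hy0
    · have key : (a - a') • x + (b - b') • y = 0 := by
        linear_combination (norm := module) heq
      obtain ⟨h1, h2⟩ := indep2 hx hy key
      exact sub_eq_zero.mp h2
  have hPex : ∀ x, ∃ b, S x b := by
    intro x
    by_cases hx : x = 0
    · refine ⟨0, ?_⟩
      intro y hy
      exact ⟨0, by simp [hx]⟩
    · obtain ⟨y₀, hy₀⟩ := exists_out x
      obtain ⟨a₀, b₀, hab₀⟩ := Submodule.mem_span_pair.mp (hspan x y₀)
      refine ⟨b₀, ?_⟩
      intro y hy
      obtain ⟨a, b, hab⟩ := Submodule.mem_span_pair.mp (hspan x y)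
      suffices hbb : b = b₀ by exact ⟨a, by rw [← hab, hbb]⟩
      by_cases hy1 : y ∈ Submodule.span ℂ ({x, y₀} : Set V)
      · obtain ⟨c, d, hcd⟩ := Submodule.mem_span_pair.mp hy1
        have hd : d ≠ 0 := by
          intro h
          subst h
          apply hy
          rw [Submodule.mem_span_singleton]
          exact ⟨c, by simpa using hcd⟩
        have hBxy : B x y = d • B x y₀ := by
          rw [← hcd, map_add, map_smul, map_smul, halt, smul_zero, zero_add]
        have key : (a - (d * a₀ - b₀ * c)) • x + (b - b₀) • y = 0 := by
          linear_combination (norm := module) hab + hBxy - d • hab₀ + b₀ • hcd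
        obtain ⟨-, h2⟩ := indep2 hx hy key
        exact sub_eq_zero.mp h2
      · have hy₁ : y₀ + y ∉ Submodule.span ℂ ({x} : Set V) := by
          intro hmem
          obtain ⟨c, hc⟩ := Submodule.mem_span_singleton.mp hmem
          apply hy1
          rw [Submodule.mem_span_pair]
          exact ⟨c, -1, by linear_combination (norm := module) hc⟩
        obtain ⟨a₁, b₁, hab₁⟩ := Submodule.mem_span_pair.mp (hspan x (y₀ + y))
        have hsum : B x (y₀ + y) = B x y₀ + B x y := map_add _ _ _
        have key : (a₀ + a - a₁) • x + (b₀ - b₁) • y₀ + (b - b₁) • y = 0 := by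
          linear_combination (norm := module) hab₀ + hab - hab₁ - hsum
        obtain ⟨-, h2, h3⟩ := indep3 hx hy₀ hy1 key
        rw [sub_eq_zero.mp h3, sub_eq_zero.mp h2]
  choose φ₀ hφ₀ using hPex
  have hzero : φ₀ 0 = 0 := by
    refine hPu 0 _ 0 (hφ₀ 0) ?_
    intro y hy
    exact ⟨0, by simp⟩
  have hHom : ∀ (c : ℂ) (x : V), φ₀ (c • x) = c * φ₀ x := by
    intro c x
    by_cases hc : c = 0
    · simp [hc, hzero]
    · refine hPu (c • x) _ _ (hφ₀ (c • x)) ?_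
      intro y hy
      have hy' : y ∉ Submodule.span ℂ ({x} : Set V) := by
        intro hmem
        obtain ⟨d, hd⟩ := Submodule.mem_span_singleton.mp hmem
        apply hy
        rw [Submodule.mem_span_singleton]
        refine ⟨d * c⁻¹, ?_⟩
        rw [smul_smul, mul_assoc, inv_mul_cancel₀ hc, mul_one, hd]
      obtain ⟨a, ha⟩ := hφ₀ x y hy'
      refine ⟨a, ?_⟩
      rw [map_smul, LinearMap.smul_apply, ha]
      module
  have hF : ∀ x y, B x y = φ₀ x • y - φ₀ y • x := by
    intro x y
    by_cases hx : x = 0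
    · simp [hx, hzero]
    · by_cases hy : y ∈ Submodule.span ℂ ({x} : Set V)
      · obtain ⟨c, hc⟩ := Submodule.mem_span_singleton.mp hy
        rw [← hc, map_smul, halt, smul_zero, hHom]
        module
      · have hxy : x ∉ Submodule.span ℂ ({y} : Set V) := by
          intro hmem
          obtain ⟨d, hd⟩ := Submodule.mem_span_singleton.mp hmem
          have hd0 : d ≠ 0 := by
            intro h; rw [h, zero_smul] at hd; exact hx hd.symm
          apply hy
          rw [Submodule.mem_span_singleton]
          refine ⟨d⁻¹, ?_⟩
          rw [← hd, smul_smul, inv_mul_cancel₀ hd0, one_smul]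
        obtain ⟨a, ha⟩ := hφ₀ x y hy
        obtain ⟨a', ha'⟩ := hφ₀ y x hxy
        have hsk : B x y = - B y x := hskew x y
        have key : (a + φ₀ y) • x + (φ₀ x + a') • y = 0 := by
          linear_combination (norm := module) hsk - ha - ha'
        obtain ⟨h1, -⟩ := indep2 hx hy key
        have ha2 : a = -φ₀ y := eq_neg_of_add_eq_zero_left h1
        rw [ha, ha2]
        module
  obtain ⟨y₁, hy₁⟩ := exists_out 0
  have hy₁0 : y₁ ≠ 0 := by intro h; exact hy₁ (by simp [h])
  have hadd : ∀ x x', φ₀ (x + x') = φ₀ x + φ₀ x' := by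
    intro x x'
    have h : B (x + x') y₁ = B x y₁ + B x' y₁ := by rw [map_add, LinearMap.add_apply]
    rw [hF, hF, hF] at h
    have key : (φ₀ (x + x') - φ₀ x - φ₀ x') • y₁ = 0 := by
      linear_combination (norm := module) h
    rcases smul_eq_zero.mp key with h' | h'
    · have := sub_eq_zero.mp (by rw [sub_sub] at h'; exact h')
      exact this
    · exact absurd h' hy₁0
  exact ⟨{ toFun := φ₀, map_add' := hadd,
           map_smul' := fun c x => by simpa using hHom c x }, hF⟩

end Aux

section LieAux

variable {g : Type*} [LieRing g] [LieAlgebra ℂ g]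

lemma bracket_mem_span {g : Type*} [LieRing g] [LieAlgebra ℂ g]
    (H : ∀ x y z : g,
        ⁅x, y⁆ ⊗ₜ[ℂ] z + z ⊗ₜ[ℂ] ⁅x, y⁆ + ⁅y, z⁆ ⊗ₜ[ℂ] x + x ⊗ₜ[ℂ] ⁅y, z⁆ +
          ⁅z, x⁆ ⊗ₜ[ℂ] y + y ⊗ₜ[ℂ] ⁅z, x⁆ = (0 : g ⊗[ℂ] g))
    (x y : g) : ⁅x, y⁆ ∈ Submodule.span ℂ {x, y} := by
  set W := Submodule.span ℂ ({x, y} : Set g) with hW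
  by_cases htop : W = ⊤
  · rw [htop]; exact Submodule.mem_top
  · obtain ⟨z, -, hz⟩ := SetLike.exists_of_lt (lt_top_iff_ne_top.mpr htop : W < ⊤)
    have hx : W.mkQ x = 0 := by
      rw [Submodule.mkQ_apply, Submodule.Quotient.mk_eq_zero]
      exact Submodule.subset_span (by simp)
    have hy : W.mkQ y = 0 := by
      rw [Submodule.mkQ_apply, Submodule.Quotient.mk_eq_zero]
      exact Submodule.subset_span (by simp)
    have hz' : W.mkQ z ≠ 0 := by
      rw [Submodule.mkQ_apply, Ne, Submodule.Quotient.mk_eq_zero]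
      exact hz
    have := congrArg (TensorProduct.map W.mkQ W.mkQ) (H x y z)
    simp only [map_add, TensorProduct.map_tmul, hx, hy, TensorProduct.zero_tmul, TensorProduct.tmul_zero,
      add_zero, zero_add, map_zero] at this
    rcases sym_tmul_eq_zero this with h | h
    · have : ⁅x, y⁆ ∈ W := by
        rwa [← Submodule.Quotient.mk_eq_zero, ← Submodule.mkQ_apply]
      exact this
    · exact absurd h hz'

lemma deg_of_phi (φ : g →ₗ[ℂ] ℂ) (hF : ∀ x y : g, ⁅x, y⁆ = φ x • y - φ y • x)
    (x y z : g) :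
    ⁅x, y⁆ ⊗ₜ[ℂ] z + z ⊗ₜ[ℂ] ⁅x, y⁆ + ⁅y, z⁆ ⊗ₜ[ℂ] x + x ⊗ₜ[ℂ] ⁅y, z⁆ +
      ⁅z, x⁆ ⊗ₜ[ℂ] y + y ⊗ₜ[ℂ] ⁅z, x⁆ = (0 : TensorProduct ℂ g g) := by
  rw [hF x y, hF y z, hF z x]
  simp only [TensorProduct.sub_tmul, TensorProduct.tmul_sub, TensorProduct.smul_tmul',
    TensorProduct.tmul_smul]
  module

noncomputable def brkt : g →ₗ[ℂ] g →ₗ[ℂ] g :=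
  LinearMap.mk₂ ℂ (fun x y => ⁅x, y⁆) add_lie smul_lie lie_add lie_smul

lemma phi_of_basis (n : ℕ) (B : Basis (Fin (n + 1)) ℂ g)
    (h1 : ∀ i : Fin n, ⁅B (Fin.last n), B i.castSucc⁆ = B i.castSucc)
    (h2 : ∀ i j : Fin n, ⁅B i.castSucc, B j.castSucc⁆ = 0) :
    ∃ φ : g →ₗ[ℂ] ℂ, ∀ x y : g, ⁅x, y⁆ = φ x • y - φ y • x := by
  set φ := B.coord (Fin.last n) with hφ
  have hφval : ∀ j, φ (B j) = if j = Fin.last n then 1 else 0 := by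
    intro j
    rw [hφ, Basis.coord_apply, Basis.repr_self, Finsupp.single_apply]
  have hφlast : φ (B (Fin.last n)) = 1 := by rw [hφval]; simp
  have hφcast : ∀ k : Fin n, φ (B k.castSucc) = 0 := by
    intro k
    rw [hφval]
    simp [Fin.ne_of_lt (Fin.castSucc_lt_last k)]
  set L2 : g →ₗ[ℂ] g →ₗ[ℂ] g := LinearMap.mk₂ ℂ (fun x y => φ x • y - φ y • x)
    (fun x x' y => by simp only [map_add]; module)
    (fun c x y => by simp only [map_smul, smul_eq_mul]; module)
    (fun x y y' => by simp only [map_add]; module)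
    (fun c x y => by simp only [map_smul, smul_eq_mul]; module) with hL2
  have hmain : (brkt : g →ₗ[ℂ] g →ₗ[ℂ] g) = L2 := by
    refine Basis.ext B (fun i => Basis.ext B (fun j => ?_))
    have hb : ∀ i j, (brkt : g →ₗ[ℂ] g →ₗ[ℂ] g) (B i) (B j) = ⁅B i, B j⁆ := fun _ _ => rfl
    have hl : ∀ i j, L2 (B i) (B j) = φ (B i) • B j - φ (B j) • B i := fun _ _ => rfl
    rw [hb, hl]
    induction i using Fin.lastCases with
    | last =>
      induction j using Fin.lastCases with
      | last => rw [lie_self, hφlast]; module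
      | cast k => rw [h1 k, hφlast, hφcast, one_smul, zero_smul, sub_zero]
    | cast k =>
      induction j using Fin.lastCases with
      | last =>
        rw [← lie_skew, h1 k, hφlast, hφcast, one_smul, zero_smul, zero_sub]
      | cast l => rw [h2 k l, hφcast, hφcast, zero_smul, zero_smul, sub_zero]
  refine ⟨φ, fun x y => ?_⟩
  have := congrFun (congrArg (fun (M : g →ₗ[ℂ] g →ₗ[ℂ] g) (x : g) => M x y) hmain) x
  simpa [brkt, hL2] using this

lemma basis_of_phi [FiniteDimensional ℂ g]
    (φ : g →ₗ[ℂ] ℂ) (hF : ∀ x y : g, ⁅x, y⁆ = φ x • y - φ y • x) (f : g) (hf : φ f = 1) :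
    ∃ (n : ℕ) (B : Basis (Fin (n + 1)) ℂ g),
      (∀ i : Fin n, ⁅B (Fin.last n), B i.castSucc⁆ = B i.castSucc) ∧
      (∀ i j : Fin n, ⁅B i.castSucc, B j.castSucc⁆ = 0) := by
  classical
  have hf0 : f ≠ 0 := by
    intro h; rw [h, map_zero] at hf; exact zero_ne_one hf
  set E := LinearMap.ker φ with hE
  set F := Submodule.span ℂ ({f} : Set g) with hFdef
  have hcompl : IsCompl E F := by
    constructor
    · rw [disjoint_iff_inf_le]
      rintro x ⟨hxE, hxF⟩
      obtain ⟨c, hc⟩ := Submodule.mem_span_singleton.mp hxF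
      have : φ x = c := by rw [← hc, map_smul, hf, smul_eq_mul, mul_one]
      have hc0 : c = 0 := by rw [← this]; exact hxE
      simp only [Submodule.mem_bot]
      rw [← hc, hc0, zero_smul]
    · rw [codisjoint_iff_le_sup]
      intro x _
      have h1 : x - φ x • f ∈ E := by
        simp [hE, LinearMap.mem_ker, map_sub, map_smul, hf, smul_eq_mul]
      have h2 : φ x • f ∈ F := Submodule.smul_mem _ _ (Submodule.mem_span_singleton_self f)
      have : x = (x - φ x • f) + φ x • f := by abel
      rw [this]
      exact Submodule.add_mem _ (Submodule.mem_sup_left h1) (Submodule.mem_sup_right h2)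
  set n := finrank ℂ E with hn
  set bE := Module.finBasis ℂ E with hbE
  set bF := (Basis.singleton (Fin 1) ℂ).map (LinearEquiv.toSpanNonzeroSingleton ℂ g f hf0)
    with hbF
  set B := ((bE.prod bF).map (Submodule.prodEquivOfIsCompl E F hcompl)).reindex finSumFinEquiv
    with hB
  have hBcast : ∀ i : Fin n, B i.castSucc = (bE i : g) := by
    intro i
    have hsymm : finSumFinEquiv.symm i.castSucc = Sum.inl i := by
      rw [Equiv.symm_apply_eq, finSumFinEquiv_apply_left]
      exact Fin.ext (by simp)
    rw [hB, Basis.reindex_apply, hsymm, Basis.map_apply]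
    have hprod : (bE.prod bF) (Sum.inl i) = (bE i, (0 : F)) := by
      ext
      · rw [Basis.prod_apply_inl_fst]
      · rw [Basis.prod_apply_inl_snd]
    rw [hprod, Submodule.coe_prodEquivOfIsCompl']
    simp
  have hBlast : B (Fin.last n) = f := by
    rw [hB, Basis.reindex_apply, finSumFinEquiv_symm_last, Basis.map_apply]
    have hprod : (bE.prod bF) (Sum.inr 0) = ((0 : E), bF 0) := by
      ext
      · rw [Basis.prod_apply_inr_fst]
      · rw [Basis.prod_apply_inr_snd]
    rw [hprod, Submodule.coe_prodEquivOfIsCompl']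
    have : bF 0 = LinearEquiv.toSpanNonzeroSingleton ℂ g f hf0 1 := by
      rw [hbF, Basis.map_apply, Basis.singleton_apply]
    rw [this]
    simp [LinearEquiv.toSpanNonzeroSingleton_one]
  have hφcast : ∀ i : Fin n, φ (B i.castSucc) = 0 := by
    intro i
    rw [hBcast i]
    exact (bE i).2
  refine ⟨n, B, ?_, ?_⟩
  · intro i
    rw [hF, hBlast, hf, hφcast, one_smul, zero_smul, sub_zero]
  · intro i j
    rw [hF, hφcast, hφcast, zero_smul, zero_smul, sub_zero]

end LieAux

/-- **Polishchuk's classification of degenerate Lie algebras.**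
Let `g` be a finite-dimensional complex Lie algebra.  The following are equivalent:
(1) `g` is degenerate: for all `x, y, z ∈ g` the symmetrization of
    `⁅x,y⁆·z + ⁅y,z⁆·x + ⁅z,x⁆·y` vanishes in `g ⊗ g` (equivalently the element itself
    vanishes in `Sym²(g)`);
(2) either `g` is abelian, or `g` has a basis `e_1, …, e_{n-1}, f` with `⁅f, e_i⁆ = e_i`
    for all `i` and `⁅e_i, e_j⁆ = 0` for all `i, j`. -/
theorem degenerate_lie_algebra_iff_abelian_or_almost_abelian
    {g : Type*} [LieRing g] [LieAlgebra ℂ g] [FiniteDimensional ℂ g] :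
    (∀ x y z : g,
        ⁅x, y⁆ ⊗ₜ[ℂ] z + z ⊗ₜ[ℂ] ⁅x, y⁆ + ⁅y, z⁆ ⊗ₜ[ℂ] x + x ⊗ₜ[ℂ] ⁅y, z⁆ +
          ⁅z, x⁆ ⊗ₜ[ℂ] y + y ⊗ₜ[ℂ] ⁅z, x⁆ = (0 : g ⊗[ℂ] g)) ↔
      (IsLieAbelian g ∨
        ∃ (n : ℕ) (B : Basis (Fin (n + 1)) ℂ g),
          (∀ i : Fin n, ⁅B (Fin.last n), B i.castSucc⁆ = B i.castSucc) ∧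
          (∀ i j : Fin n, ⁅B i.castSucc, B j.castSucc⁆ = 0)) := by
  constructor
  · intro H
    by_cases hab : IsLieAbelian g
    · exact Or.inl hab
    · right
      have H2 : ∀ v : g, Submodule.span ℂ ({v} : Set g) ≠ ⊤ := by
        intro v htop
        apply hab
        constructor
        intro x y
        obtain ⟨a, ha⟩ := Submodule.mem_span_singleton.mp
          (htop ▸ Submodule.mem_top : x ∈ Submodule.span ℂ ({v} : Set g))
        obtain ⟨b, hb⟩ := Submodule.mem_span_singleton.mp
          (htop ▸ Submodule.mem_top : y ∈ Submodule.span ℂ ({v} : Set g))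
        rw [← ha, ← hb, smul_lie, lie_smul, lie_self, smul_zero, smul_zero]
      obtain ⟨φ, hF⟩ := lemmaL (brkt (g := g)) (fun x => lie_self x)
        (fun x y => bracket_mem_span H x y) H2
      have hF' : ∀ x y : g, ⁅x, y⁆ = φ x • y - φ y • x := hF
      have hne : ∃ f : g, φ f ≠ 0 := by
        by_contra hcon
        push_neg at hcon
        apply hab
        constructor
        intro x y
        rw [hF' x y, hcon, hcon, zero_smul, zero_smul, sub_zero]
      obtain ⟨f', hf'⟩ := hne
      have hf : φ ((φ f')⁻¹ • f') = 1 := by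
        rw [map_smul, smul_eq_mul, inv_mul_cancel₀ hf']
      exact basis_of_phi φ hF' _ hf
  · rintro (hab | ⟨n, B, h1, h2⟩)
    · intro x y z
      haveI := hab
      exact deg_of_phi 0 (fun x y => by simp [trivial_lie_zero]) x y z
    · obtain ⟨φ, hF⟩ := phi_of_basis n B h1 h2
      exact fun x y z => deg_of_phi φ hF x y z
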